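/- arXiv:1409.1745 — 3 statements merged into one kernel-verified Lean document; each statement's English description precedes it below -/
import Mathlib

section
/- Fix $i < s$ in $(-1,1)$ and $f_0 \in (i,s)$. Define $V(x) = s - i + \int_x^{f_0} c(i,y,s)[L(y)-L(x)]\,m(dy)$ for $x \in [i, f_0]$. Then $V(f_0) = s-i$, $V'(f_0-) = 0$ (smooth fit), $\mathbb L_X V(x) = c(i,x,s)$ for $x \in (i, f_0)$, and $V(x) \ge s-i$ for all $x \in [i,f_0]$ whenever $c(i,\cdot,s) > 0$. -/
open MeasureTheory Set

/-- The candidate value function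
`V(x) = s - i + ∫_x^{f₀} c(y)[L(y)-L(x)] m(dy)` on `[i,f₀]` satisfies `V(f₀) = s-i`,
the smooth-fit condition `V'(f₀-) = 0`, `𝕃_X V = c` on `(i,f₀)`, and `V ≥ s-i`
whenever `c > 0`. -/
theorem candidate_value_function_lower_piece
    (μ σ : ℝ → ℝ) (hμ : ContinuousOn μ (Ioo (-1:ℝ) 1))
    (hσ : ContinuousOn σ (Ioo (-1:ℝ) 1)) (hσpos : ∀ y ∈ Ioo (-1:ℝ) 1, 0 < σ y)
    (L : ℝ → ℝ)
    (hL : ∀ x ∈ Ioo (-1:ℝ) 1,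
      L x = ∫ y in (0:ℝ)..x, Real.exp (-∫ z in (0:ℝ)..y, μ z / (σ z ^ 2 / 2)))
    (i s f₀ : ℝ) (hi : i ∈ Ioo (-1:ℝ) 1) (hs : s ∈ Ioo (-1:ℝ) 1)
    (his : i < s) (hf₀ : f₀ ∈ Ioo i s)
    (c : ℝ → ℝ) (hc : ContinuousOn c (Ioo (-1:ℝ) 1))
    (hcpos : ∀ y ∈ Ioo (-1:ℝ) 1, 0 < c y)
    (V : ℝ → ℝ)
    (hV : ∀ x ∈ Icc i f₀,
      V x = s - i + ∫ y in x..f₀, c y * (L y - L x) / (deriv L y * (σ y ^ 2 / 2))) :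
    V f₀ = s - i
    ∧ derivWithin V (Iic f₀) f₀ = 0
    ∧ (∀ x ∈ Ioo i f₀,
        μ x * deriv V x + (σ x ^ 2 / 2) * deriv (deriv V) x = c x)
    ∧ ∀ x ∈ Icc i f₀, s - i ≤ V x := by
  have hU : IsOpen (Ioo (-1:ℝ) 1) := isOpen_Ioo
  have hOC : OrdConnected (Ioo (-1:ℝ) 1) := ordConnected_Ioo
  have h0U : (0:ℝ) ∈ Ioo (-1:ℝ) 1 := by constructor <;> norm_num
  have hf₀U : f₀ ∈ Ioo (-1:ℝ) 1 := ⟨lt_trans hi.1 hf₀.1, lt_trans hf₀.2 hs.2⟩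
  have hsubU : Icc i f₀ ⊆ Ioo (-1:ℝ) 1 :=
    fun y hy => ⟨lt_of_lt_of_le hi.1 hy.1, lt_of_le_of_lt hy.2 hf₀U.2⟩
  have hσ2pos : ∀ y ∈ Ioo (-1:ℝ) 1, 0 < σ y ^ 2 / 2 :=
    fun y hy => div_pos (pow_pos (hσpos y hy) 2) two_pos
  have hσ2cont : ContinuousOn (fun y => σ y ^ 2 / 2) (Ioo (-1:ℝ) 1) := (hσ.pow 2).div_const 2
  -- the function q = μ / (σ²/2)
  set q : ℝ → ℝ := fun y => μ y / (σ y ^ 2 / 2) with hqdef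
  have hqcont : ContinuousOn q (Ioo (-1:ℝ) 1) :=
    hμ.div hσ2cont (fun y hy => (hσ2pos y hy).ne')
  set g : ℝ → ℝ := fun y => ∫ z in (0:ℝ)..y, q z with hgdef
  have hqint : ∀ a ∈ Ioo (-1:ℝ) 1, ∀ b ∈ Ioo (-1:ℝ) 1, IntervalIntegrable q volume a b :=
    fun a ha b hb => (hqcont.mono (hOC.uIcc_subset ha hb)).intervalIntegrable
  have hg' : ∀ x ∈ Ioo (-1:ℝ) 1, HasDerivAt g (q x) x := fun x hx =>
    intervalIntegral.integral_hasDerivAt_right (hqint 0 h0U x hx)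
      (hqcont.stronglyMeasurableAtFilter hU x hx)
      (hqcont.continuousAt (hU.mem_nhds hx))
  -- h = L', the derivative of the scale function
  set h : ℝ → ℝ := fun y => Real.exp (-g y) with hhdef
  have hhpos : ∀ y, 0 < h y := fun y => Real.exp_pos _
  have hh' : ∀ x ∈ Ioo (-1:ℝ) 1, HasDerivAt h (-q x * h x) x := by
    intro x hx
    have := ((hg' x hx).neg).exp
    exact this.congr_deriv (by simp only [hhdef, Pi.neg_apply]; ring)
  have hhcont : ContinuousOn h (Ioo (-1:ℝ) 1) :=
    fun x hx => ((hh' x hx).continuousAt).continuousWithinAt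
  have hhint : ∀ a ∈ Ioo (-1:ℝ) 1, ∀ b ∈ Ioo (-1:ℝ) 1, IntervalIntegrable h volume a b :=
    fun a ha b hb => (hhcont.mono (hOC.uIcc_subset ha hb)).intervalIntegrable
  -- canonical form of L
  have hLh : ∀ u ∈ Ioo (-1:ℝ) 1, L u = ∫ z in (0:ℝ)..u, h z := by
    intro u hu
    rw [hL u hu]
  have hL' : ∀ x ∈ Ioo (-1:ℝ) 1, HasDerivAt L (h x) x := by
    intro x hx
    have hd : HasDerivAt (fun u => ∫ z in (0:ℝ)..u, h z) (h x) x :=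
      intervalIntegral.integral_hasDerivAt_right (hhint 0 h0U x hx)
        (hhcont.stronglyMeasurableAtFilter hU x hx)
        (hhcont.continuousAt (hU.mem_nhds hx))
    apply hd.congr_of_eventuallyEq
    filter_upwards [hU.mem_nhds hx] with u hu
    exact hLh u hu
  have hLcont : ContinuousOn L (Ioo (-1:ℝ) 1) :=
    fun x hx => (hL' x hx).continuousAt.continuousWithinAt
  have hderivL : ∀ y ∈ Ioo (-1:ℝ) 1, deriv L y = h y := fun y hy => (hL' y hy).deriv
  -- the function r = c / (L' σ²/2)
  set r : ℝ → ℝ := fun y => c y / (h y * (σ y ^ 2 / 2)) with hrdef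
  have hrcont : ContinuousOn r (Ioo (-1:ℝ) 1) :=
    hc.div (hhcont.mul hσ2cont) (fun y hy => (mul_pos (hhpos y) (hσ2pos y hy)).ne')
  set B : ℝ → ℝ := fun x => ∫ y in x..f₀, r y with hBdef
  set A : ℝ → ℝ := fun x => ∫ y in x..f₀, L y * r y with hAdef
  have hLrcont : ContinuousOn (fun y => L y * r y) (Ioo (-1:ℝ) 1) := hLcont.mul hrcont
  have hB' : ∀ x ∈ Ioo (-1:ℝ) 1, HasDerivAt B (-r x) x := fun x hx =>
    intervalIntegral.integral_hasDerivAt_left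
      ((hrcont.mono (hOC.uIcc_subset hx hf₀U)).intervalIntegrable)
      (hrcont.stronglyMeasurableAtFilter hU x hx)
      (hrcont.continuousAt (hU.mem_nhds hx))
  have hA' : ∀ x ∈ Ioo (-1:ℝ) 1, HasDerivAt A (-(L x * r x)) x := fun x hx =>
    intervalIntegral.integral_hasDerivAt_left
      ((hLrcont.mono (hOC.uIcc_subset hx hf₀U)).intervalIntegrable)
      (hLrcont.stronglyMeasurableAtFilter hU x hx)
      (hLrcont.continuousAt (hU.mem_nhds hx))
  set W : ℝ → ℝ := fun x => s - i + (A x - L x * B x) with hWdef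
  -- V agrees with W on [i, f₀]
  have hVW : ∀ x ∈ Icc i f₀, V x = W x := by
    intro x hx
    have hxU : x ∈ Ioo (-1:ℝ) 1 := hsubU hx
    have hsub : uIcc x f₀ ⊆ Ioo (-1:ℝ) 1 := hOC.uIcc_subset hxU hf₀U
    have h1 : ∀ y ∈ uIcc x f₀,
        c y * (L y - L x) / (deriv L y * (σ y ^ 2 / 2)) = L y * r y - L x * r y := by
      intro y hy
      rw [hderivL y (hsub hy), hrdef]
      ring
    have hint1 : IntervalIntegrable (fun y => L y * r y) volume x f₀ :=
      (hLrcont.mono hsub).intervalIntegrable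
    have hint2 : IntervalIntegrable (fun y => L x * r y) volume x f₀ :=
      ((hrcont.mono hsub).intervalIntegrable).const_mul (L x)
    rw [hV x hx, hWdef]
    rw [intervalIntegral.integral_congr h1, intervalIntegral.integral_sub hint1 hint2,
      intervalIntegral.integral_const_mul]
  -- derivative of W
  have hW' : ∀ x ∈ Ioo (-1:ℝ) 1, HasDerivAt W (-(h x * B x)) x := by
    intro x hx
    have := ((hA' x hx).sub ((hL' x hx).mul (hB' x hx))).const_add (s - i)
    exact this.congr_deriv (by ring)
  -- Part 1
  have hif₀ : i ≤ f₀ := hf₀.1.le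
  have part1 : V f₀ = s - i := by
    rw [hV f₀ ⟨hif₀, le_refl f₀⟩, intervalIntegral.integral_same, add_zero]
  -- Part 2
  have hBf₀ : B f₀ = 0 := intervalIntegral.integral_same
  have part2 : derivWithin V (Iic f₀) f₀ = 0 := by
    have hVWev : V =ᶠ[nhdsWithin f₀ (Iic f₀)] W := by
      filter_upwards [mem_nhdsWithin_of_mem_nhds (Ioi_mem_nhds hf₀.1),
        self_mem_nhdsWithin] with u hu1 hu2
      exact hVW u ⟨le_of_lt hu1, hu2⟩
    rw [Filter.EventuallyEq.derivWithin_eq hVWev (hVW f₀ ⟨hif₀, le_refl f₀⟩)]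
    have := ((hW' f₀ hf₀U).hasDerivWithinAt (s := Iic f₀)).derivWithin
      (uniqueDiffOn_Iic f₀ f₀ (self_mem_Iic))
    rw [this, hBf₀]
    ring
  -- Part 3
  have hIooU : Ioo i f₀ ⊆ Ioo (-1:ℝ) 1 := fun u hu => hsubU ⟨hu.1.le, hu.2.le⟩
  have hopen : IsOpen (Ioo i f₀) := isOpen_Ioo
  have hdV : ∀ u ∈ Ioo i f₀, deriv V u = -(h u * B u) := by
    intro u hu
    have hevu : V =ᶠ[nhds u] W := by
      filter_upwards [hopen.mem_nhds hu] with v hv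
      exact hVW v (Ioo_subset_Icc_self hv)
    rw [Filter.EventuallyEq.deriv_eq hevu, (hW' u (hIooU hu)).deriv]
  have part3 : ∀ x ∈ Ioo i f₀,
      μ x * deriv V x + (σ x ^ 2 / 2) * deriv (deriv V) x = c x := by
    intro x hx
    have hxU : x ∈ Ioo (-1:ℝ) 1 := hIooU hx
    have hdev : deriv V =ᶠ[nhds x] fun u => -(h u * B u) := by
      filter_upwards [hopen.mem_nhds hx] with u hu
      exact hdV u hu
    have hW'' : HasDerivAt (fun u => -(h u * B u)) (-((-q x * h x) * B x + h x * -r x)) x :=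
      ((hh' x hxU).mul (hB' x hxU)).neg
    have hd2 : deriv (deriv V) x = -((-q x * h x) * B x + h x * -r x) := by
      rw [Filter.EventuallyEq.deriv_eq hdev, hW''.deriv]
    rw [hdV x hx, hd2, hqdef, hrdef]
    have ht : σ x ^ 2 / 2 ≠ 0 := (hσ2pos x hxU).ne'
    have hhx : h x ≠ 0 := (hhpos x).ne'
    have hσx : σ x ≠ 0 := (hσpos x hxU).ne'
    field_simp
    ring
  -- Part 4
  have part4 : ∀ x ∈ Icc i f₀, s - i ≤ V x := by
    intro x hx
    have hxU : x ∈ Ioo (-1:ℝ) 1 := hsubU hx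
    rw [hV x hx]
    have hnn : 0 ≤ ∫ y in x..f₀, c y * (L y - L x) / (deriv L y * (σ y ^ 2 / 2)) := by
      apply intervalIntegral.integral_nonneg hx.2
      intro y hy
      have hyU : y ∈ Ioo (-1:ℝ) 1 := hsubU ⟨le_trans hx.1 hy.1, hy.2⟩
      have hLxy : 0 ≤ L y - L x := by
        have heq : L y - L x = ∫ z in x..y, h z := by
          rw [hLh y hyU, hLh x hxU]
          exact intervalIntegral.integral_interval_sub_left (hhint 0 h0U y hyU)
            (hhint 0 h0U x hxU)
        rw [heq]
        exact intervalIntegral.integral_nonneg hy.1 (fun z _ => (hhpos z).le)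
      rw [hderivL y hyU]
      exact div_nonneg (mul_nonneg (hcpos y hyU).le hLxy)
        (mul_pos (hhpos y) (hσ2pos y hyU)).le
    linarith
  exact ⟨part1, part2, part3, part4⟩
end

section
/- Let $c_1, c_2: (-1,1) \to \mathbb R$ be continuously differentiable, $L$ the scale function and $H$ a particular solution of $\mathbb L_X H = 1$ for a diffusion $X$ with generator $\mathbb L_X$ on $(-1,1)$. Suppose $V(i,x,s) = A(i,s)L(x) + B(i,s) + (c_2(s)-c_1(i))H(x)$ with $A, B$ twice continuously differentiable, and that $V$ satisfies the normal reflection conditions $\partial_i V(i,x,s)|_{x=i+} = 0$ and $\partial_s V(i,x,s)|_{x=s-} = 0$ for all $i < s$ in some open region. Then $\partial^2 A/\partial i\,\partial s = 0$ and $\partial^2 B/\partial i\,\partial s = 0$ on that region, so $A(i,s) = a_1(i) + a_2(s)$ and $B(i,s) = b_1(i) + b_2(s)$ for some functions $a_1, a_2, b_1, b_2$. -/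
open Set

section Aux

variable {E : Type*} [NormedAddCommGroup E] [NormedSpace ℝ E]

/-- First partial derivative of a function on `ℝ × ℝ`. -/
lemma aux_hasDerivAt_fst {G : ℝ × ℝ → E} {i s : ℝ} (hG : DifferentiableAt ℝ G (i, s)) :
    HasDerivAt (fun i' => G (i', s)) (fderiv ℝ G (i, s) (1, 0)) i :=
  hG.hasFDerivAt.comp_hasDerivAt i ((hasDerivAt_id i).prodMk (hasDerivAt_const i s))

lemma aux_hasDerivAt_snd {G : ℝ × ℝ → E} {i s : ℝ} (hG : DifferentiableAt ℝ G (i, s)) :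
    HasDerivAt (fun s' => G (i, s')) (fderiv ℝ G (i, s) (0, 1)) s :=
  hG.hasFDerivAt.comp_hasDerivAt s ((hasDerivAt_const s i).prodMk (hasDerivAt_id s))

variable {F : ℝ → ℝ → ℝ}

/-- The first partial in `i`, as `deriv`. -/
lemma aux_deriv_fst (hF : Differentiable ℝ (fun p : ℝ × ℝ => F p.1 p.2)) (i s : ℝ) :
    deriv (fun i' => F i' s) i = fderiv ℝ (fun p : ℝ × ℝ => F p.1 p.2) (i, s) (1, 0) :=
  (aux_hasDerivAt_fst (hF (i, s))).deriv

lemma aux_deriv_snd (hF : Differentiable ℝ (fun p : ℝ × ℝ => F p.1 p.2)) (i s : ℝ) :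
    deriv (fun s' => F i s') s = fderiv ℝ (fun p : ℝ × ℝ => F p.1 p.2) (i, s) (0, 1) :=
  (aux_hasDerivAt_snd (hF (i, s))).deriv

/-- Mixed partial ∂ₛ∂ᵢ as a second fderiv. -/
lemma aux_hasDerivAt_mixed₁ (hF : ContDiff ℝ 2 (fun p : ℝ × ℝ => F p.1 p.2)) (i s : ℝ) :
    HasDerivAt (fun s' => deriv (fun i' => F i' s') i)
      (fderiv ℝ (fderiv ℝ (fun p : ℝ × ℝ => F p.1 p.2)) (i, s) (0, 1) (1, 0)) s := by
  have hdiff : Differentiable ℝ (fun p : ℝ × ℝ => F p.1 p.2) :=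
    hF.differentiable (by norm_num)
  have h1 : ContDiff ℝ 1 (fderiv ℝ (fun p : ℝ × ℝ => F p.1 p.2)) :=
    hF.fderiv_right (by norm_num)
  have key : HasDerivAt (fun s' => fderiv ℝ (fun p : ℝ × ℝ => F p.1 p.2) (i, s'))
      (fderiv ℝ (fderiv ℝ (fun p : ℝ × ℝ => F p.1 p.2)) (i, s) (0, 1)) s :=
    aux_hasDerivAt_snd ((h1.differentiable one_ne_zero) (i, s))
  have key2 := key.clm_apply (hasDerivAt_const s ((1:ℝ), (0:ℝ)))
  simp only [map_zero, add_zero] at key2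
  refine key2.congr_of_eventuallyEq (Filter.Eventually.of_forall fun s' => ?_)
  exact aux_deriv_fst hdiff i s'

/-- Mixed partial ∂ᵢ∂ₛ as a second fderiv. -/
lemma aux_hasDerivAt_mixed₂ (hF : ContDiff ℝ 2 (fun p : ℝ × ℝ => F p.1 p.2)) (i s : ℝ) :
    HasDerivAt (fun i' => deriv (fun s' => F i' s') s)
      (fderiv ℝ (fderiv ℝ (fun p : ℝ × ℝ => F p.1 p.2)) (i, s) (1, 0) (0, 1)) i := by
  have hdiff : Differentiable ℝ (fun p : ℝ × ℝ => F p.1 p.2) :=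
    hF.differentiable (by norm_num)
  have h1 : ContDiff ℝ 1 (fderiv ℝ (fun p : ℝ × ℝ => F p.1 p.2)) :=
    hF.fderiv_right (by norm_num)
  have key : HasDerivAt (fun i' => fderiv ℝ (fun p : ℝ × ℝ => F p.1 p.2) (i', s))
      (fderiv ℝ (fderiv ℝ (fun p : ℝ × ℝ => F p.1 p.2)) (i, s) (1, 0)) i :=
    aux_hasDerivAt_fst ((h1.differentiable one_ne_zero) (i, s))
  have key2 := key.clm_apply (hasDerivAt_const i ((0:ℝ), (1:ℝ)))
  simp only [map_zero, add_zero] at key2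
  refine key2.congr_of_eventuallyEq (Filter.Eventually.of_forall fun i' => ?_)
  exact aux_deriv_snd hdiff i' s

/-- Symmetry of second derivatives. -/
lemma aux_symm (hF : ContDiff ℝ 2 (fun p : ℝ × ℝ => F p.1 p.2)) (i s : ℝ) :
    fderiv ℝ (fderiv ℝ (fun p : ℝ × ℝ => F p.1 p.2)) (i, s) (0, 1) (1, 0)
      = fderiv ℝ (fderiv ℝ (fun p : ℝ × ℝ => F p.1 p.2)) (i, s) (1, 0) (0, 1) := by
  have h1 : ContDiff ℝ 1 (fderiv ℝ (fun p : ℝ × ℝ => F p.1 p.2)) :=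
    hF.fderiv_right (by norm_num)
  exact second_derivative_symmetric
    (fun y => ((hF.differentiable (by norm_num)) y).hasFDerivAt)
    (((h1.differentiable one_ne_zero) (i, s)).hasFDerivAt) _ _

/-- A function with derivative `0` on an open interval is constant there. -/
lemma aux_const_of_deriv_zero {f : ℝ → ℝ} {a b x y : ℝ}
    (hf : ∀ z ∈ Ioo a b, HasDerivAt f 0 z) (hx : x ∈ Ioo a b) (hy : y ∈ Ioo a b) :
    f x = f y := by
  refine (convex_Ioo a b).is_const_of_fderivWithin_eq_zero
    (fun z hz => (hf z hz).differentiableAt.differentiableWithinAt) (fun z hz => ?_) hx hy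
  rw [fderivWithin_of_isOpen isOpen_Ioo hz, (hf z hz).hasFDerivAt.fderiv]
  ext t
  simp

end Aux

/-- If `V(i,x,s) = A(i,s)L(x) + B(i,s) + (c₂(s)-c₁(i))H(x)` satisfies the normal
reflection conditions `∂ᵢV(i,x,s)|_{x=i} = 0` and `∂ₛV(i,x,s)|_{x=s} = 0` on an open
rectangle `R = (p,q) × (u,v)` with `q ≤ u` (so `i < s` on `R`), then the mixed partials
of `A` and `B` vanish on `R` and consequently `A(i,s) = a₁(i) + a₂(s)` and
`B(i,s) = b₁(i) + b₂(s)` on `R`. -/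
theorem normal_reflection_implies_additive_separation
    (L H c₁ c₂ : ℝ → ℝ)
    (hL : StrictMono L)
    (hc₁ : ContDiff ℝ 1 c₁) (hc₂ : ContDiff ℝ 1 c₂)
    (A B : ℝ → ℝ → ℝ)
    (hA : ContDiff ℝ 2 fun p : ℝ × ℝ => A p.1 p.2)
    (hB : ContDiff ℝ 2 fun p : ℝ × ℝ => B p.1 p.2)
    (V : ℝ → ℝ → ℝ → ℝ)
    (hV : ∀ i x s, V i x s = A i s * L x + B i s + (c₂ s - c₁ i) * H x)
    (p q u v : ℝ) (hpq : p < q) (huv : u < v) (hqu : q ≤ u)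
    (hrefl_i : ∀ i ∈ Ioo p q, ∀ s ∈ Ioo u v, deriv (fun i' => V i' i s) i = 0)
    (hrefl_s : ∀ i ∈ Ioo p q, ∀ s ∈ Ioo u v, deriv (fun s' => V i s s') s = 0) :
    (∀ i ∈ Ioo p q, ∀ s ∈ Ioo u v,
        deriv (fun s' => deriv (fun i' => A i' s') i) s = 0
        ∧ deriv (fun s' => deriv (fun i' => B i' s') i) s = 0)
    ∧ ∃ a₁ a₂ b₁ b₂ : ℝ → ℝ, ∀ i ∈ Ioo p q, ∀ s ∈ Ioo u v,
        A i s = a₁ i + a₂ s ∧ B i s = b₁ i + b₂ s := by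
  have hAd : Differentiable ℝ (fun p : ℝ × ℝ => A p.1 p.2) := hA.differentiable (by norm_num)
  have hBd : Differentiable ℝ (fun p : ℝ × ℝ => B p.1 p.2) := hB.differentiable (by norm_num)
  have hc₁d : Differentiable ℝ c₁ := hc₁.differentiable one_ne_zero
  have hc₂d : Differentiable ℝ c₂ := hc₂.differentiable one_ne_zero
  -- Equation 1: ∂ᵢA(i,s) L(i) + ∂ᵢB(i,s) - c₁'(i) H(i) = 0
  have eq1 : ∀ i ∈ Ioo p q, ∀ s ∈ Ioo u v,
      deriv (fun i' => A i' s) i * L i + deriv (fun i' => B i' s) i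
        = deriv c₁ i * H i := by
    intro i hi s hs
    have hAi : HasDerivAt (fun i' => A i' s) (deriv (fun i' => A i' s) i) i :=
      (aux_hasDerivAt_fst (hAd (i, s))).congr_deriv (aux_deriv_fst hAd i s).symm
    have hBi : HasDerivAt (fun i' => B i' s) (deriv (fun i' => B i' s) i) i :=
      (aux_hasDerivAt_fst (hBd (i, s))).congr_deriv (aux_deriv_fst hBd i s).symm
    have hc : HasDerivAt c₁ (deriv c₁ i) i := (hc₁d i).hasDerivAt
    have hVd : HasDerivAt (fun i' => V i' i s)
        (deriv (fun i' => A i' s) i * L i + deriv (fun i' => B i' s) i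
          + (0 - deriv c₁ i) * H i) i := by
      have := ((hAi.mul_const (L i)).add hBi).add
        (((hasDerivAt_const i (c₂ s)).sub hc).mul_const (H i))
      refine this.congr_of_eventuallyEq (Filter.Eventually.of_forall fun i' => ?_)
      simp only [hV, Pi.add_apply, Pi.sub_apply]
    have h0 := hrefl_i i hi s hs
    rw [hVd.deriv] at h0
    linarith
  -- Equation 2: ∂ₛA(i,s) L(s) + ∂ₛB(i,s) + c₂'(s) H(s) = 0
  have eq2 : ∀ i ∈ Ioo p q, ∀ s ∈ Ioo u v,
      deriv (fun s' => A i s') s * L s + deriv (fun s' => B i s') s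
        = -(deriv c₂ s * H s) := by
    intro i hi s hs
    have hAs : HasDerivAt (fun s' => A i s') (deriv (fun s' => A i s') s) s :=
      (aux_hasDerivAt_snd (hAd (i, s))).congr_deriv (aux_deriv_snd hAd i s).symm
    have hBs : HasDerivAt (fun s' => B i s') (deriv (fun s' => B i s') s) s :=
      (aux_hasDerivAt_snd (hBd (i, s))).congr_deriv (aux_deriv_snd hBd i s).symm
    have hc : HasDerivAt c₂ (deriv c₂ s) s := (hc₂d s).hasDerivAt
    have hVd : HasDerivAt (fun s' => V i s s')
        (deriv (fun s' => A i s') s * L s + deriv (fun s' => B i s') s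
          + (deriv c₂ s - 0) * H s) s := by
      have := ((hAs.mul_const (L s)).add hBs).add
        ((hc.sub (hasDerivAt_const s (c₁ i))).mul_const (H s))
      refine this.congr_of_eventuallyEq (Filter.Eventually.of_forall fun s' => ?_)
      simp only [hV, Pi.add_apply, Pi.sub_apply]
    have h0 := hrefl_s i hi s hs
    rw [hVd.deriv] at h0
    linarith
  -- Mixed partials vanish.
  have mixed : ∀ i ∈ Ioo p q, ∀ s ∈ Ioo u v,
      deriv (fun s' => deriv (fun i' => A i' s') i) s = 0
      ∧ deriv (fun s' => deriv (fun i' => B i' s') i) s = 0 := by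
    intro i hi s hs
    -- differentiate eq1 in s
    have hmA1 := aux_hasDerivAt_mixed₁ hA i s
    have hmB1 := aux_hasDerivAt_mixed₁ hB i s
    have hφ : HasDerivAt (fun s' => deriv (fun i' => A i' s') i * L i
        + deriv (fun i' => B i' s') i)
        (fderiv ℝ (fderiv ℝ (fun p : ℝ × ℝ => A p.1 p.2)) (i, s) (0, 1) (1, 0) * L i
          + fderiv ℝ (fderiv ℝ (fun p : ℝ × ℝ => B p.1 p.2)) (i, s) (0, 1) (1, 0)) s :=
      (hmA1.mul_const (L i)).add hmB1
    have hconst : deriv (fun s' : ℝ => deriv (fun i' => A i' s') i * L i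
        + deriv (fun i' => B i' s') i) s = 0 := by
      have hev : (fun s' : ℝ => deriv (fun i' => A i' s') i * L i
          + deriv (fun i' => B i' s') i) =ᶠ[nhds s] fun _ => deriv c₁ i * H i := by
        filter_upwards [isOpen_Ioo.mem_nhds hs] with s' hs'
        exact eq1 i hi s' hs'
      rw [hev.deriv_eq, deriv_const]
    have R1 : fderiv ℝ (fderiv ℝ (fun p : ℝ × ℝ => A p.1 p.2)) (i, s) (0, 1) (1, 0) * L i
        + fderiv ℝ (fderiv ℝ (fun p : ℝ × ℝ => B p.1 p.2)) (i, s) (0, 1) (1, 0) = 0 := by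
      rw [← hφ.deriv]; exact hconst
    -- differentiate eq2 in i
    have hmA2 := aux_hasDerivAt_mixed₂ hA i s
    have hmB2 := aux_hasDerivAt_mixed₂ hB i s
    have hψ : HasDerivAt (fun i' => deriv (fun s' => A i' s') s * L s
        + deriv (fun s' => B i' s') s)
        (fderiv ℝ (fderiv ℝ (fun p : ℝ × ℝ => A p.1 p.2)) (i, s) (1, 0) (0, 1) * L s
          + fderiv ℝ (fderiv ℝ (fun p : ℝ × ℝ => B p.1 p.2)) (i, s) (1, 0) (0, 1)) i :=
      (hmA2.mul_const (L s)).add hmB2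
    have hconst2 : deriv (fun i' : ℝ => deriv (fun s' => A i' s') s * L s
        + deriv (fun s' => B i' s') s) i = 0 := by
      have hev : (fun i' : ℝ => deriv (fun s' => A i' s') s * L s
          + deriv (fun s' => B i' s') s) =ᶠ[nhds i] fun _ => -(deriv c₂ s * H s) := by
        filter_upwards [isOpen_Ioo.mem_nhds hi] with i' hi'
        exact eq2 i' hi' s hs
      rw [hev.deriv_eq, deriv_const]
    have R2 : fderiv ℝ (fderiv ℝ (fun p : ℝ × ℝ => A p.1 p.2)) (i, s) (1, 0) (0, 1) * L s
        + fderiv ℝ (fderiv ℝ (fun p : ℝ × ℝ => B p.1 p.2)) (i, s) (1, 0) (0, 1) = 0 := by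
      rw [← hψ.deriv]; exact hconst2
    rw [← aux_symm hA i s, ← aux_symm hB i s] at R2
    have hLlt : L i < L s := hL (lt_of_lt_of_le hi.2 (le_trans hqu (le_of_lt hs.1)))
    have hA0 : fderiv ℝ (fderiv ℝ (fun p : ℝ × ℝ => A p.1 p.2)) (i, s) (0, 1) (1, 0) = 0 := by
      have hz : fderiv ℝ (fderiv ℝ (fun p : ℝ × ℝ => A p.1 p.2)) (i, s) (0, 1) (1, 0)
          * (L i - L s) = 0 := by ring_nf; linarith
      rcases mul_eq_zero.1 hz with h | h
      · exact h
      · linarith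
    have hB0 : fderiv ℝ (fderiv ℝ (fun p : ℝ × ℝ => B p.1 p.2)) (i, s) (0, 1) (1, 0) = 0 := by
      rw [hA0] at R1; linarith
    constructor
    · rw [hmA1.deriv]; exact hA0
    · rw [hmB1.deriv]; exact hB0
  refine ⟨mixed, ?_⟩
  -- Separation of variables
  set i₀ := (p + q) / 2 with hi₀def
  set s₀ := (u + v) / 2 with hs₀def
  have hi₀ : i₀ ∈ Ioo p q := ⟨by simp [hi₀def]; linarith, by simp [hi₀def]; linarith⟩
  have hs₀ : s₀ ∈ Ioo u v := ⟨by simp [hs₀def]; linarith, by simp [hs₀def]; linarith⟩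
  have sep : ∀ (F : ℝ → ℝ → ℝ), Differentiable ℝ (fun p : ℝ × ℝ => F p.1 p.2) →
      ContDiff ℝ 2 (fun p : ℝ × ℝ => F p.1 p.2) →
      (∀ i ∈ Ioo p q, ∀ s ∈ Ioo u v,
        deriv (fun s' => deriv (fun i' => F i' s') i) s = 0) →
      ∀ i ∈ Ioo p q, ∀ s ∈ Ioo u v, F i s = F i s₀ + (F i₀ s - F i₀ s₀) := by
    intro F hFd hF hmix i hi s hs
    -- For each i' in (p,q), s ↦ ∂ᵢF(i',s) is constant on (u,v)
    have hconstP : ∀ i' ∈ Ioo p q, deriv (fun x => F x s) i' = deriv (fun x => F x s₀) i' := by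
      intro i' hi'
      exact aux_const_of_deriv_zero (f := fun t => deriv (fun x => F x t) i')
        (fun t ht => by
          have := aux_hasDerivAt_mixed₁ hF i' t
          have h0 := hmix i' hi' t ht
          rw [(aux_hasDerivAt_mixed₁ hF i' t).deriv] at h0
          rw [← h0]; exact this) hs hs₀
    -- g(i') := F i' s - F i' s₀ has derivative 0 on (p,q)
    have hg : ∀ i' ∈ Ioo p q, HasDerivAt (fun x => F x s - F x s₀) 0 i' := by
      intro i' hi'
      have h1 : HasDerivAt (fun x => F x s) (deriv (fun x => F x s) i') i' :=
        (aux_hasDerivAt_fst (hFd (i', s))).congr_deriv (aux_deriv_fst hFd i' s).symm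
      have h2 : HasDerivAt (fun x => F x s₀) (deriv (fun x => F x s₀) i') i' :=
        (aux_hasDerivAt_fst (hFd (i', s₀))).congr_deriv (aux_deriv_fst hFd i' s₀).symm
      have := h1.sub h2
      rw [hconstP i' hi', sub_self] at this
      exact this
    have := aux_const_of_deriv_zero hg hi hi₀
    linarith
  refine ⟨fun i => A i s₀, fun s => A i₀ s - A i₀ s₀,
    fun i => B i s₀, fun s => B i₀ s - B i₀ s₀, fun i hi s hs => ?_⟩
  exact ⟨sep A hAd hA (fun i hi s hs => (mixed i hi s hs).1) i hi s hs,
    sep B hBd hB (fun i hi s hs => (mixed i hi s hs).2) i hi s hs⟩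
end

section
/- Let $X$ be a continuous semimartingale, $I_t = i \wedge \inf_{u\le t} X_u$ and $S_t = s \vee \sup_{u \le t} X_u$ for $i \le X_0 \le s$. If $V$ is a $C^{1,2,1}$ function of $(i,x,s)$ on $\{i \le x \le s\}$ satisfying $\partial_i V(i,x,s)|_{x=i} = 0$ and $\partial_s V(i,x,s)|_{x=s} = 0$, then in the Itô expansion of $V(I_t, X_t, S_t)$ the integrals $\int_0^t \partial_i V(I_u,X_u,S_u)\,dI_u$ and $\int_0^t \partial_s V(I_u,X_u,S_u)\,dS_u$ vanish almost surely. -/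
open MeasureTheory Set

/-- The sup of a continuous function over `Icc 0 u` is attained. -/
lemma sup_attained_aux (f : ℝ → ℝ) (hf : Continuous f) {u : ℝ} (hu : 0 ≤ u) :
    ∃ w ∈ Icc (0:ℝ) u, sSup (f '' Icc 0 u) = f w ∧ ∀ v ∈ Icc (0:ℝ) u, f v ≤ f w := by
  obtain ⟨w, hw, hmax⟩ := isCompact_Icc.exists_isMaxOn ⟨0, left_mem_Icc.2 hu⟩ hf.continuousOn
  refine ⟨w, hw, ?_, fun v hv => hmax hv⟩
  refine IsGreatest.csSup_eq ⟨mem_image_of_mem f hw, ?_⟩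
  rintro y ⟨v, hv, rfl⟩
  exact hmax hv

/-- Left approximation of the running maximum Stieltjes function. -/
lemma left_approx_aux (f : ℝ → ℝ) (hf : Continuous f) (c : ℝ) (S : StieltjesFunction ℝ)
    (hS : ∀ u : ℝ, 0 ≤ u → S u = max c (sSup (f '' Icc 0 u)))
    {u : ℝ} (hu : 0 < u) {ε : ℝ} (hε : 0 < ε) (l : ℝ) (hl : l < u) :
    ∃ v, l < v ∧ 0 ≤ v ∧ v < u ∧ S u - ε < S v := by
  obtain ⟨w, hw, hsup, hmax⟩ := sup_attained_aux f hf hu.le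
  have hSu : S u = max c (f w) := by rw [hS u hu.le, hsup]
  obtain ⟨δ, hδ, hδ'⟩ := Metric.continuous_iff.mp hf u (ε/2) (by linarith)
  set m := max (max l (u - δ)) 0 with hm
  have hmu : m < u := max_lt (max_lt hl (by linarith)) hu
  set v := (m + u)/2 with hv
  have hm0 : 0 ≤ m := le_max_right _ _
  have hv1 : m < v := by rw [hv]; linarith
  have hv2 : v < u := by rw [hv]; linarith
  have hv0 : 0 ≤ v := le_trans hm0 hv1.le
  have hlv : l < v := lt_of_le_of_lt (le_trans (le_max_left _ _) (le_max_left _ _)) hv1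
  have hSv_ge : ∀ x ∈ Icc (0:ℝ) v, max c (f x) ≤ S v := by
    intro x hx
    rw [hS v hv0]
    exact max_le_max le_rfl
      (le_csSup (isCompact_Icc.image hf).bddAbove (mem_image_of_mem f hx))
  rcases le_or_gt w v with hwv | hvw
  · have : S u ≤ S v := hSu ▸ hSv_ge w ⟨hw.1, hwv⟩
    refine ⟨v, hlv, hv0, hv2, by linarith⟩
  · -- w ∈ (v, u], so both w and v are δ-close to u
    have hδu : u - δ ≤ m := le_trans (le_max_right _ _) (le_max_left _ _)
    have hwd : dist w u < δ := by
      rw [Real.dist_eq, abs_lt]; constructor <;> [linarith [hw.2]; linarith [hw.2]]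
    have hvd : dist v u < δ := by
      rw [Real.dist_eq, abs_lt]; constructor <;> linarith
    have h1 := hδ' w hwd
    have h2 := hδ' v hvd
    rw [Real.dist_eq, abs_lt] at h1 h2
    have hfwv : f w < f v + ε := by linarith
    have key : max c (f w) < max c (f v) + ε := by
      calc max c (f w) < max (c + ε) (f v + ε) :=
            max_lt_max (lt_add_of_pos_right c hε) hfwv
        _ = max c (f v) + ε := max_add_add_right c (f v) ε
    have : S u < S v + ε := by
      rw [hSu]
      exact lt_of_lt_of_le key (by linarith [hSv_ge v ⟨hv0, le_rfl⟩])
    exact ⟨v, hlv, hv0, hv2, by linarith⟩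

/-- If the integrand vanishes on `{u : f u = S u}` where `S` is the running maximum of `f`
(with floor `c`) then its Stieltjes integral vanishes. -/
lemma key_vanish (f : ℝ → ℝ) (hf : Continuous f) (c : ℝ) (S : StieltjesFunction ℝ)
    (hS : ∀ u : ℝ, 0 ≤ u → S u = max c (sSup (f '' Icc 0 u)))
    (g : ℝ → ℝ) (t : ℝ)
    (hg : ∀ u ∈ Ioc (0:ℝ) t, f u = S u → g u = 0) :
    ∫ u in Ioc (0:ℝ) t, g u ∂S.measure = 0 := by
  have hfle : ∀ u : ℝ, 0 ≤ u → f u ≤ S u := by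
    intro u hu
    rw [hS u hu]
    exact le_max_of_le_right
      (le_csSup (isCompact_Icc.image hf).bddAbove (mem_image_of_mem f (right_mem_Icc.2 hu)))
  -- constancy on intervals where f < S
  have hconst : ∀ a b : ℝ, 0 ≤ a → a < b → (∀ w ∈ Ioc a b, f w < S w) → S b ≤ S a := by
    intro a b ha hab h
    obtain ⟨w, hw, hsup, hmax⟩ := sup_attained_aux f hf (ha.trans hab.le)
    have hSb : S b = max c (f w) := by rw [hS b (ha.trans hab.le), hsup]
    rcases le_or_gt w a with hwa | haw
    · rw [hSb, hS a ha]
      exact max_le_max le_rfl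
        (le_csSup (isCompact_Icc.image hf).bddAbove (mem_image_of_mem f ⟨hw.1, hwa⟩))
    · have h1 : f w < S w := h w ⟨haw, hw.2⟩
      have h2 : S w ≤ S b := S.mono hw.2
      have h3 : f w < max c (f w) := by rw [← hSb]; linarith
      have h4 : max c (f w) = c := by
        rcases max_cases c (f w) with ⟨h', _⟩ | ⟨h', _⟩
        · exact h'
        · exact absurd (h' ▸ h3) (lt_irrefl _)
      have h5 : c ≤ S a := by rw [hS a ha]; exact le_max_left _ _
      rw [hSb, h4]; exact h5
  -- the set where f ≠ S inside (0,t] is S.measure-null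
  have hnull : S.measure {u ∈ Ioc (0:ℝ) t | f u ≠ S u} = 0 := by
    apply measure_null_of_locally_null
    rintro u ⟨⟨hu1, hu2⟩, hne⟩
    have hlt : f u < S u := (hfle u hu1.le).lt_of_ne hne
    set d := S u - f u with hd
    have hd0 : 0 < d := by rw [hd]; linarith
    obtain ⟨δ, hδ, hδ'⟩ := Metric.continuous_iff.mp hf u (d/2) (by linarith)
    obtain ⟨v, hv1, hv0, hv2, hSv⟩ :=
      left_approx_aux f hf c S hS hu1 (show (0:ℝ) < d/2 by linarith) (u - δ) (by linarith)
    set b := min (u + δ/2) t with hb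
    have hub : u ≤ b := le_min (by linarith) hu2
    have hvb : v < b := lt_of_lt_of_le hv2 hub
    have hflt : ∀ w ∈ Ioc v b, f w < S w := by
      intro w hw
      have hwδ : dist w u < δ := by
        rw [Real.dist_eq, abs_lt]
        constructor
        · linarith [hw.1, le_trans hw.2 (min_le_left _ _)]
        · linarith [hw.1, le_trans hw.2 (min_le_left _ _)]
      have h1 := hδ' w hwδ
      rw [Real.dist_eq, abs_lt] at h1
      have h2 : S v ≤ S w := S.mono (le_of_lt hw.1)
      linarith
    have hμ : S.measure (Ioc v b) = 0 := by
      rw [StieltjesFunction.measure_Ioc]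
      have := hconst v b hv0 hvb hflt
      exact ENNReal.ofReal_eq_zero.2 (by linarith)
    refine ⟨Ioc v b, ?_, hμ⟩
    rw [mem_nhdsWithin]
    refine ⟨Ioo v (u + δ/2), isOpen_Ioo, ⟨hv2, by linarith⟩, ?_⟩
    rintro x ⟨⟨hx1, hx2⟩, ⟨⟨_, hx3⟩, _⟩⟩
    exact ⟨hx1, le_min hx2.le hx3⟩
  -- conclude
  apply integral_eq_zero_of_ae
  rw [Filter.EventuallyEq, ae_iff]
  rw [Measure.restrict_apply' measurableSet_Ioc]
  refine le_antisymm (le_trans (measure_mono ?_) hnull.le) zero_le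
  rintro x ⟨hgx, hx⟩
  refine ⟨hx, fun heq => hgx ?_⟩
  simpa using hg x hx heq

/-- Normal reflection kills the boundary integrals: for a continuous process `X` with
`I_t = i ∧ inf_{u≤t} X_u` (decreasing) and `S_t = s ∨ sup_{u≤t} X_u` (increasing), if
`V` is `C¹` and satisfies `∂ᵢV(i,x,s)|_{x=i} = 0` and `∂ₛV(i,x,s)|_{x=s} = 0`, then the
(Stieltjes) integrals `∫_0^t ∂ᵢV(I_u,X_u,S_u) dI_u` and `∫_0^t ∂ₛV(I_u,X_u,S_u) dS_u`
in the Itô expansion of `V(I_t,X_t,S_t)` vanish almost surely.  Here `dS` is the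
Lebesgue–Stieltjes measure of the increasing path `S` and `dI = -d(-I)` that of `I`. -/
theorem normal_reflection_integrals_vanish
    {Ω : Type*} [MeasurableSpace Ω] (P : Measure Ω) [IsProbabilityMeasure P]
    (X : ℝ → Ω → ℝ) (hXcont : ∀ ω, Continuous fun t => X t ω)
    (i s : ℝ) (hiX : ∀ ω, i ≤ X 0 ω) (hXs : ∀ ω, X 0 ω ≤ s)
    (Ifn Sfn : ℝ → Ω → ℝ)
    (hIfn : ∀ ω, ∀ t, 0 ≤ t → Ifn t ω = min i (sInf ((fun u => X u ω) '' Icc 0 t)))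
    (hSfn : ∀ ω, ∀ t, 0 ≤ t → Sfn t ω = max s (sSup ((fun u => X u ω) '' Icc 0 t)))
    (SS II : Ω → StieltjesFunction ℝ)
    (hSS : ∀ ω, ∀ t, 0 ≤ t → SS ω t = Sfn t ω)
    (hII : ∀ ω, ∀ t, 0 ≤ t → II ω t = -Ifn t ω)
    (V : ℝ → ℝ → ℝ → ℝ)
    (hVsmooth : ContDiff ℝ 1 fun p : ℝ × ℝ × ℝ => V p.1 p.2.1 p.2.2)
    (hrefl_i : ∀ a b : ℝ, a ≤ b → deriv (fun a' => V a' a b) a = 0)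
    (hrefl_s : ∀ a b : ℝ, a ≤ b → deriv (fun b' => V a b b') b = 0)
    (t : ℝ) (ht : 0 ≤ t) :
    ∀ᵐ ω ∂P,
      (∫ u in Ioc (0:ℝ) t,
          deriv (fun a' => V a' (X u ω) (Sfn u ω)) (Ifn u ω) ∂(II ω).measure = 0)
      ∧ (∫ u in Ioc (0:ℝ) t,
          deriv (fun b' => V (Ifn u ω) (X u ω) b') (Sfn u ω) ∂(SS ω).measure = 0) := by
  refine Filter.Eventually.of_forall fun ω => ⟨?_, ?_⟩
  · -- the I-integral; apply key_vanish to f = -X, c = -i, S = II ω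
    have himg : ∀ u : ℝ, (fun v => -X v ω) '' Icc 0 u = -((fun v => X v ω) '' Icc 0 u) := by
      intro u
      rw [← Set.image_neg_eq_neg, ← Set.image_image (f := fun v => X v ω) (g := Neg.neg)]
    refine key_vanish (fun u => -X u ω) (hXcont ω).neg (-i) (II ω) ?_ _ t ?_
    · intro u hu
      rw [hII ω u hu, hIfn ω u hu, himg u]
      have : sSup (-((fun v => X v ω) '' Icc 0 u)) = -sInf ((fun v => X v ω) '' Icc 0 u) := by
        rw [Real.sInf_def, neg_neg]
      rw [this]
      rcases le_total i (sInf ((fun v => X v ω) '' Icc 0 u)) with h | h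
      · rw [min_eq_left h, max_eq_left (neg_le_neg h)]
      · rw [min_eq_right h, max_eq_right (neg_le_neg h)]
    · intro u hu heq
      have hXI : X u ω = Ifn u ω := by
        have h' : -X u ω = -Ifn u ω := heq.trans (hII ω u hu.1.le)
        linarith
      have hXleS : X u ω ≤ Sfn u ω := by
        rw [hSfn ω u hu.1.le]
        exact le_max_of_le_right
          (le_csSup (isCompact_Icc.image (hXcont ω)).bddAbove
            (mem_image_of_mem _ (right_mem_Icc.2 hu.1.le)))
      rw [← hXI]
      exact hrefl_i _ _ hXleS
  · -- the S-integral
    refine key_vanish (fun u => X u ω) (hXcont ω) s (SS ω) ?_ _ t ?_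
    · intro u hu
      rw [hSS ω u hu, hSfn ω u hu]
    · intro u hu heq
      have hSX : Sfn u ω = X u ω := ((heq.trans (hSS ω u hu.1.le)).symm)
      have hIleX : Ifn u ω ≤ X u ω := by
        rw [hIfn ω u hu.1.le]
        exact min_le_of_right_le
          (csInf_le (isCompact_Icc.image (hXcont ω)).bddBelow
            (mem_image_of_mem _ (right_mem_Icc.2 hu.1.le)))
      rw [hSX]
      exact hrefl_s _ _ hIleX
end
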